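/- arXiv:2206.07161 — 4 statements merged into one kernel-verified Lean document; each statement's English description precedes it below -/
import Mathlib

section
/- Let F: R^D → R be L_F-smooth and bounded below. Suppose the update is w^{t+1} = w^t − η · m^t / (√(v^t) + ε_0), where m^t, v^t ∈ R^D (componentwise division and square root), and there exist constants c_l, c_u > 0 such that c_l ≤ 1/(√(v^t_j) + ε_0) ≤ c_u for every coordinate j. Then for any step size η ≤ c_l / (2 c_u^2 L_F), one has F(w^{t+1}) ≤ F(w^t) + (η c_u / 2)·‖∇F(w^t) − m^t‖² − (η c_l / 2)·‖∇F(w^t)‖² − (η c_l / 4)·‖m^t‖². -/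
open scoped RealInnerProductSpace

theorem descent_lemma_aux {E : Type*} [NormedAddCommGroup E] [InnerProductSpace ℝ E]
    [CompleteSpace E] (F : E → ℝ) (L : ℝ) (hL : 0 ≤ L)
    (hdiff : Differentiable ℝ F)
    (hsmooth : ∀ x y, ‖gradient F x - gradient F y‖ ≤ L * ‖x - y‖)
    (x y : E) :
    F y ≤ F x + ⟪gradient F x, y - x⟫ + L / 2 * ‖y - x‖ ^ 2 := by
  set d := y - x with hd
  have hgc : Continuous (gradient F) := by
    refine (LipschitzWith.of_dist_le_mul (K := ⟨L, hL⟩) ?_).continuous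
    intro a b
    rw [dist_eq_norm, dist_eq_norm]; exact hsmooth a b
  set g : ℝ → ℝ := fun t => ⟪gradient F (x + t • d), d⟫ with hg
  have hgcont : Continuous g := by
    apply Continuous.inner
    · exact hgc.comp (by continuity)
    · exact continuous_const
  have hderiv : ∀ t : ℝ, HasDerivAt (fun s => F (x + s • d)) (g t) t := by
    intro t
    have h1 : HasFDerivAt (fun s : ℝ => x + s • d) (ContinuousLinearMap.smulRight (1 : ℝ →L[ℝ] ℝ) d) t := by
      simpa [ContinuousLinearMap.smulRight_one_eq_toSpanSingleton] using ((hasDerivAt_id t).smul_const d).const_add x |>.hasFDerivAt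
    have h2 : HasGradientAt F (gradient F (x + t • d)) (x + t • d) :=
      (hdiff _).hasGradientAt
    have h3 := (hasGradientAt_iff_hasFDerivAt.1 h2).comp t h1
    have := h3.hasDerivAt
    simpa [g, InnerProductSpace.toDual_apply_apply, real_inner_comm, Function.comp_def] using this
  have hint : IntervalIntegrable g MeasureTheory.volume 0 1 := hgcont.intervalIntegrable 0 1
  have hftc : ∫ t in (0:ℝ)..1, g t = F (x + (1:ℝ) • d) - F (x + (0:ℝ) • d) :=
    intervalIntegral.integral_eq_sub_of_hasDerivAt (fun t _ => hderiv t) hint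
  have hx0 : x + (0:ℝ) • d = x := by simp
  have hx1 : x + (1:ℝ) • d = y := by simp [hd]
  rw [hx0, hx1] at hftc
  have hbound : ∫ t in (0:ℝ)..1, g t ≤ ∫ t in (0:ℝ)..1, (g 0 + L * t * ‖d‖ ^ 2) := by
    apply intervalIntegral.integral_mono_on (by norm_num) hint
    · exact (continuous_const.add ((continuous_const.mul continuous_id).mul continuous_const)).intervalIntegrable 0 1
    · intro t ht
      have h1 : g t - g 0 ≤ L * t * ‖d‖ ^ 2 := by
        have : g t - g 0 = ⟪gradient F (x + t • d) - gradient F x, d⟫ := by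
          simp [g, inner_sub_left]
        rw [this]
        calc ⟪gradient F (x + t • d) - gradient F x, d⟫
            ≤ ‖gradient F (x + t • d) - gradient F x‖ * ‖d‖ := real_inner_le_norm _ _
          _ ≤ (L * ‖(x + t • d) - x‖) * ‖d‖ := by
              gcongr; exact hsmooth _ _
          _ = L * t * ‖d‖ ^ 2 := by
              have : ‖(x + t • d) - x‖ = t * ‖d‖ := by
                simp [norm_smul, abs_of_nonneg ht.1]
              rw [this]; ring
      linarith
  have hval : ∫ t in (0:ℝ)..1, (g 0 + L * t * ‖d‖ ^ 2) = g 0 + L / 2 * ‖d‖ ^ 2 := by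
    rw [intervalIntegral.integral_add (intervalIntegrable_const)
      ((by continuity : Continuous fun t : ℝ => L * t * ‖d‖ ^ 2).intervalIntegrable 0 1)]
    simp only [intervalIntegral.integral_const, smul_eq_mul, one_mul, sub_zero]
    have : ∫ t in (0:ℝ)..1, L * t * ‖d‖ ^ 2 = L / 2 * ‖d‖ ^ 2 := by
      have : (fun t : ℝ => L * t * ‖d‖ ^ 2) = fun t : ℝ => (L * ‖d‖ ^ 2) * t := by
        funext t; ring
      rw [this, intervalIntegral.integral_const_mul, integral_id]
      ring
    rw [this]
  have hg0 : g 0 = ⟪gradient F x, d⟫ := by simp [g]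
  rw [hftc, hval, hg0] at hbound
  linarith

theorem coord_ineq_aux (L η cl cu a G M : ℝ) (hL : 0 < L) (hη : 0 < η) (hcl : 0 < cl)
    (ha1 : cl ≤ a) (ha2 : a ≤ cu) (hcond : η * (2 * cu ^ 2 * L) ≤ cl) :
    G * (-(η * (M * a))) + L / 2 * (-(η * (M * a))) ^ 2
      ≤ η * cu / 2 * (G - M) ^ 2 - η * cl / 2 * G ^ 2 - η * cl / 4 * M ^ 2 := by
  have ha0 : 0 < a := lt_of_lt_of_le hcl ha1
  have h1 : a * (G - M) ^ 2 ≤ cu * (G - M) ^ 2 := by nlinarith [sq_nonneg (G - M)]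
  have h2 : cl * G ^ 2 ≤ a * G ^ 2 := by nlinarith [sq_nonneg G]
  have h3 : cl * M ^ 2 ≤ a * M ^ 2 := by nlinarith [sq_nonneg M]
  have h4 : a ^ 2 * M ^ 2 ≤ cu ^ 2 * M ^ 2 :=
    mul_le_mul_of_nonneg_right (by nlinarith : a ^ 2 ≤ cu ^ 2) (sq_nonneg M)
  have h5 : η * (2 * cu ^ 2 * L) * M ^ 2 ≤ cl * M ^ 2 := by nlinarith [sq_nonneg M]
  nlinarith [mul_pos hη (mul_pos hη hL), sq_nonneg M, mul_pos hη hcl,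
    mul_le_mul_of_nonneg_left h1 (le_of_lt (by linarith : (0:ℝ) < η / 2)),
    mul_le_mul_of_nonneg_left h2 (le_of_lt (by linarith : (0:ℝ) < η / 2)),
    mul_le_mul_of_nonneg_left h3 (le_of_lt (by linarith : (0:ℝ) < η / 2)),
    mul_le_mul_of_nonneg_left h4 (le_of_lt (by positivity : (0:ℝ) < L * η ^ 2 / 2)),
    mul_le_mul_of_nonneg_left h5 (le_of_lt (by linarith : (0:ℝ) < η / 4))]

theorem euclidean_norm_sq_eq {D : ℕ} (x : EuclideanSpace ℝ (Fin D)) :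
    ‖x‖ ^ 2 = ∑ j, x j ^ 2 := by
  rw [EuclideanSpace.norm_eq, Real.sq_sqrt (by positivity)]
  simp [Real.norm_eq_abs, sq_abs]

/-- Descent lemma for the Adam-style update `w' = w - η m / (√v + ε₀)` (componentwise):
if `F` is `L_F`-smooth and bounded below, the preconditioner satisfies
`c_l ≤ 1/(√(v_j) + ε₀) ≤ c_u` in every coordinate, and `η ≤ c_l / (2 c_u² L_F)`, then
`F w' ≤ F w + (η c_u/2)‖∇F(w) - m‖² - (η c_l/2)‖∇F(w)‖² - (η c_l/4)‖m‖²`. -/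
theorem adam_style_descent_lemma (D : ℕ) (F : EuclideanSpace ℝ (Fin D) → ℝ)
    (L_F c_l c_u η ε₀ : ℝ) (hLF : 0 < L_F) (hε₀ : 0 < ε₀)
    (hcl : 0 < c_l) (hcu : 0 < c_u)
    (hdiff : Differentiable ℝ F)
    (hsmooth : ∀ x y, ‖gradient F x - gradient F y‖ ≤ L_F * ‖x - y‖)
    (hbdd : ∃ B, ∀ x, B ≤ F x)
    (m v w w' : EuclideanSpace ℝ (Fin D))
    (hbox : ∀ j, c_l ≤ 1 / (Real.sqrt (v j) + ε₀) ∧ 1 / (Real.sqrt (v j) + ε₀) ≤ c_u)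
    (hupd : ∀ j, w' j = w j - η * (m j / (Real.sqrt (v j) + ε₀)))
    (hη0 : 0 < η) (hη : η ≤ c_l / (2 * c_u ^ 2 * L_F)) :
    F w' ≤ F w + (η * c_u / 2) * ‖gradient F w - m‖ ^ 2
      - (η * c_l / 2) * ‖gradient F w‖ ^ 2 - (η * c_l / 4) * ‖m‖ ^ 2 := by
  set G := gradient F w with hG
  have key := descent_lemma_aux F L_F hLF.le hdiff hsmooth w w'
  have hcond : η * (2 * c_u ^ 2 * L_F) ≤ c_l := by
    exact (le_div_iff₀ (by positivity)).mp hη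
  -- rewrite inner products and norms as sums
  have hinner : ⟪G, w' - w⟫ = ∑ j, G j * (w' j - w j) := by
    simp [PiLp.inner_apply, RCLike.inner_apply, PiLp.sub_apply]
    exact Finset.sum_congr rfl fun _ _ => mul_comm _ _
  have hn1 : ‖w' - w‖ ^ 2 = ∑ j, (w' j - w j) ^ 2 := by
    rw [euclidean_norm_sq_eq]; rfl
  have hn2 : ‖G - m‖ ^ 2 = ∑ j, (G j - m j) ^ 2 := by
    rw [euclidean_norm_sq_eq]; rfl
  have hn3 : ‖G‖ ^ 2 = ∑ j, G j ^ 2 := euclidean_norm_sq_eq G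
  have hn4 : ‖m‖ ^ 2 = ∑ j, m j ^ 2 := euclidean_norm_sq_eq m
  have hdelta : ∀ j, w' j - w j = -(η * (m j * (1 / (Real.sqrt (v j) + ε₀)))) := by
    intro j; rw [hupd j]; ring
  have main : ⟪G, w' - w⟫ + L_F / 2 * ‖w' - w‖ ^ 2
      ≤ (η * c_u / 2) * ‖G - m‖ ^ 2 - (η * c_l / 2) * ‖G‖ ^ 2 - (η * c_l / 4) * ‖m‖ ^ 2 := by
    rw [hinner, hn1, hn2, hn3, hn4, Finset.mul_sum, Finset.mul_sum, Finset.mul_sum,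
      Finset.mul_sum, ← Finset.sum_add_distrib, ← Finset.sum_sub_distrib,
      ← Finset.sum_sub_distrib]
    apply Finset.sum_le_sum
    intro j _
    rw [hdelta j]
    exact coord_ineq_aux L_F η c_l c_u (1 / (Real.sqrt (v j) + ε₀)) (G j) (m j)
      hLF hη0 hcl (hbox j).1 (hbox j).2 hcond
  linarith
end

section
/- Suppose σ: R^d → R^d is C_σ-Lipschitz, the aggregator A is C_A-Lipschitz in the sense that ‖A(S₁) − A(S₂)‖ ≤ C_A · Σ_{u ∈ O} ‖h_u − h'_u‖ whenever the two input multisets S₁, S₂ differ only on the index set O, and ‖W‖ ≤ C_k (operator norm). Let h_v = σ(W · A({h_u : u ∈ S} ∪ {h̃_u : u ∈ O})) be the pseudo-full-neighborhood embedding using stale embeddings h̃_u = h_u^{old} for out-of-batch nodes u ∈ O, and let h̄_v = σ(W · A({h_u : u ∈ N̄_v})) be the full-neighborhood embedding. Then ‖h_v − h̄_v‖ ≤ C_σ C_k C_A · Σ_{u ∈ O} ‖h_u^{old} − h_u‖. -/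
/-- GNNAutoScale staleness bound: the pseudo-full-neighborhood embedding built from
current in-batch embeddings and stale historical embeddings of out-of-batch nodes
differs from the full-neighborhood embedding by at most
`C_σ C_k C_A ∑_{u ∈ O} ‖h_u^{old} - h_u‖`. -/
theorem gnnautoscale_staleness_bound (d : ℕ) (ι : Type*) [Fintype ι] [DecidableEq ι]
    (Cσ CA Ck : ℝ) (hCσ : 0 ≤ Cσ) (hCk : 0 ≤ Ck)
    (σ : EuclideanSpace ℝ (Fin d) → EuclideanSpace ℝ (Fin d))
    (hσ : ∀ x y, ‖σ x - σ y‖ ≤ Cσ * ‖x - y‖)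
    (W : EuclideanSpace ℝ (Fin d) →L[ℝ] EuclideanSpace ℝ (Fin d)) (hW : ‖W‖ ≤ Ck)
    (A : (ι → EuclideanSpace ℝ (Fin d)) → EuclideanSpace ℝ (Fin d))
    (hA : ∀ (h h' : ι → EuclideanSpace ℝ (Fin d)) (O : Finset ι),
      (∀ u ∉ O, h u = h' u) → ‖A h - A h'‖ ≤ CA * ∑ u ∈ O, ‖h u - h' u‖)
    (O : Finset ι) (h hold hstale : ι → EuclideanSpace ℝ (Fin d))
    (hst : ∀ u, hstale u = if u ∈ O then hold u else h u) :
    ‖σ (W (A hstale)) - σ (W (A h))‖ ≤ Cσ * Ck * CA * ∑ u ∈ O, ‖hold u - h u‖ := by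
  have hAeq : ∀ u ∉ O, hstale u = h u := by
    intro u hu; rw [hst u, if_neg hu]
  have hsum : ∑ u ∈ O, ‖hstale u - h u‖ = ∑ u ∈ O, ‖hold u - h u‖ := by
    refine Finset.sum_congr rfl fun u hu => by rw [hst u, if_pos hu]
  have h1 : ‖A hstale - A h‖ ≤ CA * ∑ u ∈ O, ‖hold u - h u‖ := by
    have := hA hstale h O hAeq
    rwa [hsum] at this
  calc ‖σ (W (A hstale)) - σ (W (A h))‖
      ≤ Cσ * ‖W (A hstale) - W (A h)‖ := hσ _ _
    _ = Cσ * ‖W (A hstale - A h)‖ := by rw [map_sub]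
    _ ≤ Cσ * (Ck * ‖A hstale - A h‖) := by
        exact mul_le_mul_of_nonneg_left ((W.le_opNorm _).trans
          (mul_le_mul_of_nonneg_right hW (norm_nonneg _))) hCσ
    _ ≤ Cσ * (Ck * (CA * ∑ u ∈ O, ‖hold u - h u‖)) := by gcongr
    _ = Cσ * Ck * CA * ∑ u ∈ O, ‖hold u - h u‖ := by ring
end

section
/- Let F(w) = f_{K+1} ∘ ... ∘ f_1(w) with each f_k being L_f-Lipschitz with L_g-Lipschitz Jacobian, and ∇F(w) = ∇f_1(w)·∇f_2(y_1)···∇f_{K+1}(y_K) where y_k = f_k ∘ ... ∘ f_1(w). For arbitrary points u_0 = w, u_1, ..., u_K, the gradient estimation error satisfies ‖∇F(w) − ∏_{k=1}^{K+1} ∇f_k(u_{k−1})‖ ≤ L_f^K L_g · Σ_{k=1}^K ‖y_k − u_k‖, and consequently ‖∇F(w) − ∏_{k=1}^{K+1} ∇f_k(u_{k−1})‖² ≤ K · Σ_{k=1}^K C_k² ‖f_k(u_{k−1}) − u_k‖² where C_k = L_f^K L_g (1 + L_f + ... + L_f^{K−k}). -/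
/-- Gradient estimation error for a nested composition: with `y_k = C k w` the exact
intermediate values and `u_0 = w, u_1, ..., u_K` arbitrary approximations, if each `f k`
is `L_f`-Lipschitz with `L_g`-Lipschitz Jacobian, then the product of Jacobians evaluated
at the approximate points satisfies
`‖∇F(w) - ∏ ∇f_k(u_{k-1})‖ ≤ L_f^K L_g ∑_{k=1}^K ‖y_k - u_k‖`, and consequently
`‖∇F(w) - ∏ ∇f_k(u_{k-1})‖² ≤ K ∑_{k=1}^K C_k² ‖f_k(u_{k-1}) - u_k‖²` with
`C_k = L_f^K L_g (1 + L_f + ... + L_f^{K-k})`. -/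
theorem gradient_product_estimation_error
    (V : ℕ → Type*) [∀ k, NormedAddCommGroup (V k)] [∀ k, NormedSpace ℝ (V k)]
    (K : ℕ) (L_f L_g : ℝ) (hLf : 0 ≤ L_f) (hLg : 0 ≤ L_g)
    (f : ∀ k, V k → V (k + 1))
    (hdiff : ∀ k, Differentiable ℝ (f k))
    (hlip : ∀ k (a b : V k), ‖f k a - f k b‖ ≤ L_f * ‖a - b‖)
    (hjac : ∀ k (a b : V k), ‖fderiv ℝ (f k) a - fderiv ℝ (f k) b‖ ≤ L_g * ‖a - b‖)
    (C : ∀ k, V 0 → V k)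
    (hC0 : ∀ w, C 0 w = w) (hCs : ∀ k w, C (k + 1) w = f k (C k w))
    (w : V 0) (u : ∀ k, V k) (hu0 : u 0 = w)
    (G : ∀ k, V 0 →L[ℝ] V k)
    (hG0 : G 0 = ContinuousLinearMap.id ℝ (V 0))
    (hGs : ∀ k, G (k + 1) = (fderiv ℝ (f k) (u k)).comp (G k)) :
    ‖fderiv ℝ (C (K + 1)) w - G (K + 1)‖ ≤
        L_f ^ K * L_g * ∑ k ∈ Finset.Icc 1 K, ‖C k w - u k‖ ∧
      ‖fderiv ℝ (C (K + 1)) w - G (K + 1)‖ ^ 2 ≤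
        (K : ℝ) * ∑ k ∈ Finset.range K,
          (L_f ^ K * L_g * ∑ j ∈ Finset.range (K - k), L_f ^ j) ^ 2 *
            ‖f k (u k) - u (k + 1)‖ ^ 2 := by
  have hCid : C 0 = (id : V 0 → V 0) := funext hC0
  have hCfun : ∀ k, C (k + 1) = fun x => f k (C k x) := fun k => funext fun x => hCs k x
  have hCdiff : ∀ k, Differentiable ℝ (C k) := by
    intro k
    induction k with
    | zero => rw [hCid]; exact differentiable_id
    | succ k ih => rw [hCfun k]; exact (hdiff k).comp ih
  have hD : ∀ k, fderiv ℝ (C (k + 1)) w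
      = (fderiv ℝ (f k) (C k w)).comp (fderiv ℝ (C k) w) := by
    intro k
    rw [hCfun k]
    exact fderiv_comp w ((hdiff k) (C k w)) ((hCdiff k) w)
  have hfnorm : ∀ k (x : V k), ‖fderiv ℝ (f k) x‖ ≤ L_f := fun k x =>
    norm_fderiv_le_of_lip' ℝ hLf (Filter.Eventually.of_forall fun y => hlip k y x)
  have hGnorm : ∀ k, ‖G k‖ ≤ L_f ^ k := by
    intro k
    induction k with
    | zero => rw [hG0]; simpa using ContinuousLinearMap.norm_id_le
    | succ k ih =>
      rw [hGs k, pow_succ]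
      calc ‖(fderiv ℝ (f k) (u k)).comp (G k)‖
          ≤ ‖fderiv ℝ (f k) (u k)‖ * ‖G k‖ := ContinuousLinearMap.opNorm_comp_le _ _
        _ ≤ L_f * L_f ^ k := mul_le_mul (hfnorm k _) ih (norm_nonneg _) hLf
        _ = L_f ^ k * L_f := mul_comm _ _
  -- main induction
  have key : ∀ n, ‖fderiv ℝ (C (n + 1)) w - G (n + 1)‖ ≤
      L_f ^ n * L_g * ∑ k ∈ Finset.range (n + 1), ‖C k w - u k‖ := by
    intro n
    induction n with
    | zero =>
      have hC0w : C 0 w = u 0 := by rw [hC0, hu0]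
      have heq : fderiv ℝ (C 1) w = G 1 := by
        rw [hD 0, hGs 0, hG0, hC0w]
        congr 1
        rw [hCid, fderiv_id]
      rw [heq, sub_self, norm_zero]
      have : (0:ℝ) ≤ ∑ k ∈ Finset.range 1, ‖C k w - u k‖ :=
        Finset.sum_nonneg fun _ _ => norm_nonneg _
      positivity
    | succ n ih =>
      set A := fderiv ℝ (f (n + 1)) (C (n + 1) w) with hA
      set B := fderiv ℝ (f (n + 1)) (u (n + 1)) with hB
      have hsplit : fderiv ℝ (C (n + 2)) w - G (n + 2)
          = A.comp (fderiv ℝ (C (n + 1)) w - G (n + 1)) + (A - B).comp (G (n + 1)) := by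
        rw [hD (n + 1), hGs (n + 1), ContinuousLinearMap.comp_sub,
          ContinuousLinearMap.sub_comp]
        abel
      calc ‖fderiv ℝ (C (n + 2)) w - G (n + 2)‖
          ≤ ‖A.comp (fderiv ℝ (C (n + 1)) w - G (n + 1))‖ + ‖(A - B).comp (G (n + 1))‖ := by
            rw [hsplit]; exact norm_add_le _ _
        _ ≤ L_f * ‖fderiv ℝ (C (n + 1)) w - G (n + 1)‖
            + (L_g * ‖C (n + 1) w - u (n + 1)‖) * L_f ^ (n + 1) := by
            gcongr
            · exact (ContinuousLinearMap.opNorm_comp_le _ _).trans <|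
                mul_le_mul_of_nonneg_right (hfnorm _ _) (norm_nonneg _)
            · exact (ContinuousLinearMap.opNorm_comp_le _ _).trans <|
                mul_le_mul (hjac _ _ _) (hGnorm _)
                  (norm_nonneg _) (by positivity)
        _ ≤ L_f * (L_f ^ n * L_g * ∑ k ∈ Finset.range (n + 1), ‖C k w - u k‖)
            + (L_g * ‖C (n + 1) w - u (n + 1)‖) * L_f ^ (n + 1) := by gcongr
        _ = L_f ^ (n + 1) * L_g * ∑ k ∈ Finset.range (n + 2), ‖C k w - u k‖ := by
            rw [Finset.sum_range_succ (fun k => ‖C k w - u k‖) (n + 1)]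
            ring
  -- the k = 0 term vanishes
  have hsum0 : ∑ k ∈ Finset.range (K + 1), ‖C k w - u k‖
      = ∑ k ∈ Finset.Icc 1 K, ‖C k w - u k‖ := by
    rw [Finset.sum_range_succ']
    have h0 : ‖C 0 w - u 0‖ = 0 := by rw [hC0, hu0, sub_self, norm_zero]
    rw [h0, add_zero, ← Finset.Ico_add_one_right_eq_Icc, Finset.sum_Ico_eq_sum_range]
    exact Finset.sum_congr (by norm_num) fun i _ => by rw [Nat.add_comm]
  have part1 : ‖fderiv ℝ (C (K + 1)) w - G (K + 1)‖ ≤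
      L_f ^ K * L_g * ∑ k ∈ Finset.Icc 1 K, ‖C k w - u k‖ := by
    rw [← hsum0]; exact key K
  refine ⟨part1, ?_⟩
  -- telescoping error propagation
  have htel : ∀ k, ‖C k w - u k‖ ≤
      ∑ j ∈ Finset.range k, L_f ^ (k - 1 - j) * ‖f j (u j) - u (j + 1)‖ := by
    intro k
    induction k with
    | zero => simp [hC0, hu0]
    | succ k ih =>
      have hdec : C (k + 1) w - u (k + 1)
          = (f k (C k w) - f k (u k)) + (f k (u k) - u (k + 1)) := by
        rw [hCs k w]; abel
      calc ‖C (k + 1) w - u (k + 1)‖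
          ≤ ‖f k (C k w) - f k (u k)‖ + ‖f k (u k) - u (k + 1)‖ := by
            rw [hdec]; exact norm_add_le _ _
        _ ≤ L_f * ‖C k w - u k‖ + ‖f k (u k) - u (k + 1)‖ := by
            gcongr; exact hlip k _ _
        _ ≤ L_f * (∑ j ∈ Finset.range k, L_f ^ (k - 1 - j) * ‖f j (u j) - u (j + 1)‖)
            + ‖f k (u k) - u (k + 1)‖ := by gcongr
        _ = (∑ j ∈ Finset.range k, L_f ^ (k - j) * ‖f j (u j) - u (j + 1)‖)
            + ‖f k (u k) - u (k + 1)‖ := by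
            rw [Finset.mul_sum]
            congr 1
            refine Finset.sum_congr rfl fun j hj => ?_
            have hjk : j < k := Finset.mem_range.1 hj
            have he : k - j = (k - 1 - j) + 1 := by omega
            rw [he, pow_succ, ← mul_assoc, mul_comm L_f (L_f ^ (k - 1 - j))]
        _ = ∑ j ∈ Finset.range (k + 1), L_f ^ (k + 1 - 1 - j) * ‖f j (u j) - u (j + 1)‖ := by
            rw [Finset.sum_range_succ]
            simp
  -- swap the double sum
  have hswap : ∑ k ∈ Finset.Icc 1 K,
      ∑ j ∈ Finset.range k, L_f ^ (k - 1 - j) * ‖f j (u j) - u (j + 1)‖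
      = ∑ j ∈ Finset.range K,
          (∑ i ∈ Finset.range (K - j), L_f ^ i) * ‖f j (u j) - u (j + 1)‖ := by
    rw [Finset.sum_comm' (s' := fun j => Finset.Icc (j + 1) K) (t' := Finset.range K)
      (by intro k j; simp only [Finset.mem_Icc, Finset.mem_range]; omega)]
    refine Finset.sum_congr rfl fun j hj => ?_
    rw [← Finset.sum_mul]
    congr 1
    rw [← Finset.Ico_add_one_right_eq_Icc, Finset.sum_Ico_eq_sum_range]
    refine Finset.sum_congr (by congr 1; omega) fun i _ => ?_
    congr 1
    omega
  have hsum2 : ∑ k ∈ Finset.Icc 1 K, ‖C k w - u k‖ ≤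
      ∑ j ∈ Finset.range K,
        (∑ i ∈ Finset.range (K - j), L_f ^ i) * ‖f j (u j) - u (j + 1)‖ := by
    rw [← hswap]
    exact Finset.sum_le_sum fun k _ => htel k
  -- combine
  set T := ∑ k ∈ Finset.range K,
      (L_f ^ K * L_g * ∑ j ∈ Finset.range (K - k), L_f ^ j) * ‖f k (u k) - u (k + 1)‖ with hT
  have hcomb : ‖fderiv ℝ (C (K + 1)) w - G (K + 1)‖ ≤ T := by
    calc ‖fderiv ℝ (C (K + 1)) w - G (K + 1)‖
        ≤ L_f ^ K * L_g * ∑ k ∈ Finset.Icc 1 K, ‖C k w - u k‖ := part1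
      _ ≤ L_f ^ K * L_g * ∑ j ∈ Finset.range K,
            (∑ i ∈ Finset.range (K - j), L_f ^ i) * ‖f j (u j) - u (j + 1)‖ := by
          gcongr
      _ = T := by
          rw [hT, Finset.mul_sum]
          exact Finset.sum_congr rfl fun j _ => by ring
  have hTnn : (0:ℝ) ≤ T := le_trans (norm_nonneg _) hcomb
  calc ‖fderiv ℝ (C (K + 1)) w - G (K + 1)‖ ^ 2
      ≤ T ^ 2 := by
        exact pow_le_pow_left₀ (norm_nonneg _) hcomb 2
    _ ≤ (Finset.range K).card * ∑ k ∈ Finset.range K,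
          ((L_f ^ K * L_g * ∑ j ∈ Finset.range (K - k), L_f ^ j)
            * ‖f k (u k) - u (k + 1)‖) ^ 2 := by
        rw [hT]
        exact sq_sum_le_card_mul_sum_sq
    _ = (K : ℝ) * ∑ k ∈ Finset.range K,
          (L_f ^ K * L_g * ∑ j ∈ Finset.range (K - k), L_f ^ j) ^ 2 *
            ‖f k (u k) - u (k + 1)‖ ^ 2 := by
        rw [Finset.card_range]
        congr 1
        exact Finset.sum_congr rfl fun k _ => by ring
end

section
/- In the GraphFM-IB feature-momentum update, if for each sampled node i the update is u_{k,i}^{t+1} = (1−β)u_{k,i}^t + β f̂_{k,i}(u_{k−1}^t) with E[f̂_{k,i}] = f_{k,i}(u_{k−1}^t), E[‖f̂_{k,i} − f_{k,i}‖²] ≤ σ_f², and exactly the nodes in a uniformly random batch B of size B are updated (others unchanged), then E[Σ_{i∈B}‖u_{k,i}^{t+1} − u_{k,i}^t‖²] ≤ β² B σ_f² + (β² B / n)·E[‖f_k(u_{k−1}^t) − u_k^t‖²]. -/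
open MeasureTheory

local notation "⟪" x ", " y "⟫" => @inner ℝ _ _ x y

/-- Bias–variance decomposition for a vector-valued random variable. -/
lemma second_moment_decomp {Ω : Type*} [MeasurableSpace Ω] (μ : Measure Ω)
    [IsProbabilityMeasure μ] {E : Type*} [NormedAddCommGroup E] [InnerProductSpace ℝ E] [CompleteSpace E]
    (g : Ω → E) (a b : E) (hm : AEStronglyMeasurable g μ)
    (hmean : ∫ ω, g ω ∂μ = a)
    (hib : Integrable (fun ω => ‖g ω - b‖ ^ 2) μ) :
    ∫ ω, ‖g ω - b‖ ^ 2 ∂μ = (∫ ω, ‖g ω - a‖ ^ 2 ∂μ) + ‖a - b‖ ^ 2 := by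
  -- integrability of ‖g - b‖
  have hgb_meas : AEStronglyMeasurable (fun ω => g ω - b) μ := hm.sub aestronglyMeasurable_const
  have hnorm_gb : Integrable (fun ω => ‖g ω - b‖) μ := by
    refine Integrable.mono' (g := fun ω => 1 + ‖g ω - b‖ ^ 2)
      ((integrable_const 1).add hib) hgb_meas.norm ?_
    filter_upwards with ω
    rw [Real.norm_eq_abs, abs_of_nonneg (norm_nonneg _)]
    nlinarith [norm_nonneg (g ω - b), sq_nonneg (‖g ω - b‖ - 1)]
  have hgb_int : Integrable (fun ω => g ω - b) μ :=
    ⟨hgb_meas, (hasFiniteIntegral_norm_iff _).mp hnorm_gb.2⟩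
  have hg_int : Integrable g μ := by
    have h2 := hgb_int.add (integrable_const b)
    exact h2.congr (Filter.Eventually.of_forall fun ω => by simp)
  have hga_int : Integrable (fun ω => g ω - a) μ := hg_int.sub (integrable_const a)
  have hga_meas : AEStronglyMeasurable (fun ω => g ω - a) μ := hga_int.aestronglyMeasurable
  -- integrability of ‖g - a‖²
  have hia : Integrable (fun ω => ‖g ω - a‖ ^ 2) μ := by
    refine Integrable.mono' (g := fun ω => 2 * ‖g ω - b‖ ^ 2 + 2 * ‖a - b‖ ^ 2)
      ((hib.const_mul 2).add (integrable_const _)) (hga_meas.norm.pow 2) ?_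
    filter_upwards with ω
    rw [Real.norm_eq_abs, abs_of_nonneg (by positivity)]
    have h1 : ‖g ω - a‖ ≤ ‖g ω - b‖ + ‖a - b‖ := by
      have := norm_sub_le (g ω - b) (a - b)
      simpa [sub_sub_sub_cancel_right] using this
    nlinarith [norm_nonneg (g ω - a), norm_nonneg (g ω - b), norm_nonneg (a - b),
      sq_nonneg (‖g ω - b‖ - ‖a - b‖)]
  -- integrability of the inner product term
  have hinner_int : Integrable (fun ω => ⟪g ω - a, a - b⟫) μ := by
    refine Integrable.mono' (g := fun ω => ‖g ω - a‖ * ‖a - b‖)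
      (hga_int.norm.mul_const _) (hga_meas.inner aestronglyMeasurable_const) ?_
    filter_upwards with ω
    rw [Real.norm_eq_abs]
    exact abs_real_inner_le_norm _ _
  -- pointwise expansion
  have hpt : ∀ ω, ‖g ω - b‖ ^ 2
      = ‖g ω - a‖ ^ 2 + (2 * ⟪g ω - a, a - b⟫ + ‖a - b‖ ^ 2) := by
    intro ω
    have h := @norm_add_sq_real _ _ _ (g ω - a) (a - b)
    have h2 : g ω - a + (a - b) = g ω - b := by abel
    rw [h2] at h
    linarith
  rw [integral_congr_ae (Filter.Eventually.of_forall hpt)]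
  have h2 : Integrable (fun ω => 2 * ⟪g ω - a, a - b⟫ + ‖a - b‖ ^ 2) μ :=
    (hinner_int.const_mul 2).add (integrable_const _)
  rw [integral_add hia h2, integral_add (hinner_int.const_mul 2) (integrable_const _),
    integral_const_mul, integral_const]
  have hzero : ∫ ω, ⟪g ω - a, a - b⟫ ∂μ = 0 := by
    have : ∀ ω, ⟪g ω - a, a - b⟫ = ⟪a - b, g ω - a⟫ := fun ω => real_inner_comm _ _
    rw [integral_congr_ae (Filter.Eventually.of_forall this), integral_inner hga_int (a - b)]
    have : ∫ ω, (g ω - a) ∂μ = 0 := by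
      rw [integral_sub hg_int (integrable_const a), hmean, integral_const]
      simp
    rw [this, inner_zero_right]
  rw [hzero]
  simp

/-- Expected squared drift of the GraphFM-IB feature-momentum update: if exactly the
nodes in a random batch `𝓑` (independent of the stochastic evaluations, each node
included with probability `B/n`) are updated by
`u_i⁺ = (1-β) u_i + β f̂_i` with `E[f̂_i] = f_i` and `E‖f̂_i - f_i‖² ≤ σ_f²`, then
`E ∑_{i ∈ 𝓑} ‖u_i⁺ - u_i‖² ≤ β² B σ_f² + (β² B / n) ∑_i ‖f_i - u_i‖²`.
Independence is modeled by taking the batch and the evaluations on a product space. -/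
theorem graphfm_ib_batch_drift
    {Ω₁ Ω₂ : Type*} [MeasurableSpace Ω₁] [MeasurableSpace Ω₂]
    (μ₁ : Measure Ω₁) (μ₂ : Measure Ω₂)
    [IsProbabilityMeasure μ₁] [IsProbabilityMeasure μ₂]
    (n B d : ℕ) (β σf : ℝ) (hβ0 : 0 < β) (hβ1 : β ≤ 1) (hσf : 0 ≤ σf)
    (hB0 : 0 < B) (hBn : B ≤ n)
    (u f : Fin n → EuclideanSpace ℝ (Fin d))
    (fhat : Fin n → Ω₂ → EuclideanSpace ℝ (Fin d))
    (𝓑 : Ω₁ → Finset (Fin n))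
    (hcard : ∀ ω, (𝓑 ω).card = B)
    (hmeas : ∀ i : Fin n, MeasurableSet {ω | i ∈ 𝓑 ω})
    (hprob : ∀ i : Fin n, (μ₁ {ω | i ∈ 𝓑 ω}).toReal = B / n)
    (hfhat_meas : ∀ i, AEStronglyMeasurable (fhat i) μ₂)
    (hunbiased : ∀ i, ∫ ω, fhat i ω ∂μ₂ = f i)
    (hvar : ∀ i, ∫ ω, ‖fhat i ω - f i‖ ^ 2 ∂μ₂ ≤ σf ^ 2)
    (hint : ∀ i, Integrable (fun ω => ‖fhat i ω - u i‖ ^ 2) μ₂) :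
    ∫ p, (∑ i ∈ 𝓑 p.1, ‖((1 - β) • u i + β • fhat i p.2) - u i‖ ^ 2) ∂(μ₁.prod μ₂)
      ≤ β ^ 2 * B * σf ^ 2 + (β ^ 2 * B / n) * ∑ i, ‖f i - u i‖ ^ 2 := by
  have hn0 : 0 < n := lt_of_lt_of_le hB0 hBn
  have hnR : (n : ℝ) ≠ 0 := Nat.cast_ne_zero.mpr hn0.ne'
  -- reduce the integrand to an indicator·function form
  have hpt : ∀ p : Ω₁ × Ω₂,
      (∑ i ∈ 𝓑 p.1, ‖((1 - β) • u i + β • fhat i p.2) - u i‖ ^ 2)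
      = ∑ i : Fin n,
          (Set.indicator {ω | i ∈ 𝓑 ω} (fun _ => (1:ℝ)) p.1)
            * (β ^ 2 * ‖fhat i p.2 - u i‖ ^ 2) := by
    intro p
    have hterm : ∀ i, ‖((1 - β) • u i + β • fhat i p.2) - u i‖ ^ 2
        = β ^ 2 * ‖fhat i p.2 - u i‖ ^ 2 := by
      intro i
      have h1 : ((1 - β) • u i + β • fhat i p.2) - u i = β • (fhat i p.2 - u i) := by
        module
      rw [h1, norm_smul, Real.norm_eq_abs, abs_of_pos hβ0, mul_pow]
    rw [Finset.sum_congr rfl fun i _ => hterm i, ← Finset.univ_inter (𝓑 p.1),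
      ← Finset.sum_ite_mem]
    refine Finset.sum_congr rfl fun i _ => ?_
    by_cases h : i ∈ 𝓑 p.1 <;> simp [Set.indicator_apply, h]
  rw [integral_congr_ae (Filter.Eventually.of_forall hpt)]
  -- integrability of each summand on the product space
  have hterm_int : ∀ i : Fin n,
      Integrable (fun p : Ω₁ × Ω₂ =>
        (Set.indicator {ω | i ∈ 𝓑 ω} (fun _ => (1:ℝ)) p.1)
          * (β ^ 2 * ‖fhat i p.2 - u i‖ ^ 2)) (μ₁.prod μ₂) := by
    intro i
    exact Integrable.mul_prod ((integrable_const (1:ℝ)).indicator (hmeas i))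
      ((hint i).const_mul (β ^ 2))
  rw [integral_finset_sum _ fun i _ => hterm_int i]
  -- compute each term
  have hterm_eq : ∀ i : Fin n,
      ∫ p : Ω₁ × Ω₂, (Set.indicator {ω | i ∈ 𝓑 ω} (fun _ => (1:ℝ)) p.1)
          * (β ^ 2 * ‖fhat i p.2 - u i‖ ^ 2) ∂(μ₁.prod μ₂)
        = (B / n) * (β ^ 2 * ∫ ω, ‖fhat i ω - u i‖ ^ 2 ∂μ₂) := by
    intro i
    rw [integral_prod_mul (μ := μ₁) (ν := μ₂)
      (f := fun ω₁ => Set.indicator {ω | i ∈ 𝓑 ω} (fun _ => (1:ℝ)) ω₁)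
      (g := fun ω₂ => β ^ 2 * ‖fhat i ω₂ - u i‖ ^ 2)]
    congr 1
    · have : (fun ω => Set.indicator {ω | i ∈ 𝓑 ω} (fun _ => (1:ℝ)) ω)
          = Set.indicator {ω | i ∈ 𝓑 ω} (1 : Ω₁ → ℝ) := rfl
      rw [this, integral_indicator_one (hmeas i)]; exact hprob i
    · rw [integral_const_mul]
  rw [Finset.sum_congr rfl fun i _ => hterm_eq i]
  -- bound each second moment
  have hbound : ∀ i : Fin n, ∫ ω, ‖fhat i ω - u i‖ ^ 2 ∂μ₂ ≤ σf ^ 2 + ‖f i - u i‖ ^ 2 := by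
    intro i
    rw [second_moment_decomp μ₂ (fhat i) (f i) (u i) (hfhat_meas i) (hunbiased i) (hint i)]
    exact add_le_add_left (hvar i) _
  calc ∑ i : Fin n, (B / n : ℝ) * (β ^ 2 * ∫ ω, ‖fhat i ω - u i‖ ^ 2 ∂μ₂)
      ≤ ∑ i : Fin n, (B / n : ℝ) * (β ^ 2 * (σf ^ 2 + ‖f i - u i‖ ^ 2)) := by
        refine Finset.sum_le_sum fun i _ => ?_
        have hBn0 : (0:ℝ) ≤ (B : ℝ) / n := by positivity
        exact mul_le_mul_of_nonneg_left
          (mul_le_mul_of_nonneg_left (hbound i) (by positivity)) hBn0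
    _ = β ^ 2 * B * σf ^ 2 + (β ^ 2 * B / n) * ∑ i, ‖f i - u i‖ ^ 2 := by
        have hre : ∀ i : Fin n, (B / n : ℝ) * (β ^ 2 * (σf ^ 2 + ‖f i - u i‖ ^ 2))
            = (β ^ 2 * B * σf ^ 2) / n + (β ^ 2 * B / n) * ‖f i - u i‖ ^ 2 :=
          fun i => by ring
        simp only [hre]
        rw [Finset.sum_add_distrib, Finset.sum_const, ← Finset.mul_sum]
        simp only [Finset.card_univ, Fintype.card_fin, nsmul_eq_mul]
        field_simp
end
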